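/- Let M be an n×n real matrix of type 1 with var(Mᵖ) < 1 for some positive integer p, let E be the unique vector with ME = E and entries summing to 1, and let P = E·J (each column of P equals E). Then Mᵏ → P as k → ∞. -/

import Mathlib

open Matrix Filter Topology

/-- The column variation of a real matrix: half the maximum ℓ¹-distance
between two columns. -/
noncomputable def var {m n : ℕ} (A : Matrix (Fin m) (Fin n) ℝ) : ℝ :=
  (1/2) * ⨆ j : Fin n, ⨆ k : Fin n, ∑ i, |A i j - A i k|

lemma col_diff_le {m n : ℕ} (A : Matrix (Fin m) (Fin n) ℝ) (j k : Fin n) :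
    ∑ i, |A i j - A i k| ≤ 2 * var A := by
  have h1 : ∑ i, |A i j - A i k| ≤ ⨆ k' : Fin n, ∑ i, |A i j - A i k'| :=
    le_ciSup (Set.Finite.bddAbove (Set.finite_range (fun k' : Fin n => ∑ i, |A i j - A i k'|))) k
  have h2 : (⨆ k' : Fin n, ∑ i, |A i j - A i k'|) ≤
      ⨆ j' : Fin n, ⨆ k' : Fin n, ∑ i, |A i j' - A i k'| :=
    le_ciSup (Set.Finite.bddAbove (Set.finite_range (fun j' : Fin n => ⨆ k' : Fin n, ∑ i, |A i j' - A i k'|))) j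
  unfold var; linarith


lemma var_nonneg {m n : ℕ} (A : Matrix (Fin m) (Fin n) ℝ) : 0 ≤ var A := by
  rcases isEmpty_or_nonempty (Fin n) with h | h
  · unfold var; rw [Real.iSup_of_isEmpty]; norm_num
  · obtain ⟨j⟩ := h
    have := col_diff_le A j j
    simp at this
    linarith

lemma sum_mulVec {n : ℕ} (A : Matrix (Fin n) (Fin n) ℝ) (hA : ∀ k, ∑ i, A i k = 1)
    (x : Fin n → ℝ) : ∑ i, A.mulVec x i = ∑ j, x j := by
  simp_rw [mulVec, dotProduct]
  rw [Finset.sum_comm]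
  simp [← Finset.sum_mul, hA]

lemma contraction {n : ℕ} (A : Matrix (Fin n) (Fin n) ℝ)
    (x : Fin n → ℝ) (hx : ∑ j, x j = 0) :
    ∑ i, |A.mulVec x i| ≤ var A * ∑ i, |x i| := by
  set xp : Fin n → ℝ := fun j => max (x j) 0 with hxp
  set xm : Fin n → ℝ := fun j => max (-x j) 0 with hxm
  have hxp0 : ∀ j, 0 ≤ xp j := fun j => le_max_right _ _
  have hxm0 : ∀ j, 0 ≤ xm j := fun j => le_max_right _ _
  have hdiff : ∀ j, x j = xp j - xm j := by
    intro j; simp only [hxp, hxm]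
    rcases le_total (x j) 0 with h | h
    · rw [max_eq_right h, max_eq_left (neg_nonneg.2 h)]; ring
    · rw [max_eq_left h, max_eq_right (neg_nonpos.2 h)]; ring
  have habs : ∀ j, |x j| = xp j + xm j := by
    intro j; rcases le_total (x j) 0 with h | h
    · simp only [hxp, hxm]
      rw [abs_of_nonpos h, max_eq_right h, max_eq_left (neg_nonneg.2 h)]; ring
    · simp only [hxp, hxm]
      rw [abs_of_nonneg h, max_eq_left h, max_eq_right (neg_nonpos.2 h)]; ring
  set s : ℝ := ∑ j, xp j with hs
  have hs0 : 0 ≤ s := Finset.sum_nonneg fun j _ => hxp0 j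
  have hsm : ∑ j, xm j = s := by
    have h0 : ∑ j, (xp j - xm j) = 0 := by
      rw [← hx]; exact Finset.sum_congr rfl fun j _ => (hdiff j).symm
    rw [Finset.sum_sub_distrib] at h0; linarith
  have habs_sum : ∑ j, |x j| = 2 * s := by
    rw [Finset.sum_congr rfl fun j _ => habs j, Finset.sum_add_distrib, hsm]; ring
  rcases eq_or_lt_of_le hs0 with hse | hspos
  · have hx0 : x = 0 := by
      funext j
      have h1 : xp j = 0 :=
        (Finset.sum_eq_zero_iff_of_nonneg (fun j _ => hxp0 j)).1 hse.symm j (Finset.mem_univ j)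
      have h2 : xm j = 0 :=
        (Finset.sum_eq_zero_iff_of_nonneg (fun j _ => hxm0 j)).1 (by rw [hsm]; exact hse.symm) j
          (Finset.mem_univ j)
      have := hdiff j
      rw [h1, h2] at this
      simpa using this
    subst hx0
    simp [Matrix.mulVec_zero]
  · have key : ∀ i, s * A.mulVec x i = ∑ j, ∑ k, xp j * xm k * (A i j - A i k) := by
      intro i
      have hterm : ∀ j, x j * A i j = xp j * A i j - xm j * A i j := fun j => by
        rw [hdiff j]; ring
      calc s * A.mulVec x i = s * ∑ j, x j * A i j := by
            simp [mulVec, dotProduct, mul_comm]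
        _ = (∑ j, xp j * A i j) * s - (∑ k, xm k * A i k) * s := by
            rw [Finset.sum_congr rfl fun j _ => hterm j, Finset.sum_sub_distrib]; ring
        _ = ∑ j, ((xp j * A i j) * s - (∑ k, xm k * A i k) * xp j) := by
            rw [Finset.sum_sub_distrib, ← Finset.sum_mul, ← Finset.mul_sum]
        _ = ∑ j, ∑ k, ((xp j * A i j) * xm k - (xm k * A i k) * xp j) := by
            refine Finset.sum_congr rfl fun j _ => ?_
            rw [Finset.sum_sub_distrib, ← Finset.sum_mul, ← Finset.mul_sum, hsm]
        _ = ∑ j, ∑ k, xp j * xm k * (A i j - A i k) := by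
            refine Finset.sum_congr rfl fun j _ => Finset.sum_congr rfl fun k _ => by ring
    have step : s * ∑ i, |A.mulVec x i| ≤ s * (var A * (2 * s)) := by
      calc s * ∑ i, |A.mulVec x i| = ∑ i, |s * A.mulVec x i| := by
            rw [Finset.mul_sum]
            exact Finset.sum_congr rfl fun i _ => by rw [abs_mul, abs_of_pos hspos]
        _ = ∑ i, |∑ j, ∑ k, xp j * xm k * (A i j - A i k)| := by simp_rw [key]
        _ ≤ ∑ i, ∑ j, ∑ k, |xp j * xm k * (A i j - A i k)| :=
            Finset.sum_le_sum fun i _ => (Finset.abs_sum_le_sum_abs _ _).trans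
              (Finset.sum_le_sum fun j _ => Finset.abs_sum_le_sum_abs _ _)
        _ = ∑ j, ∑ k, xp j * xm k * ∑ i, |A i j - A i k| := by
            rw [Finset.sum_comm]
            refine Finset.sum_congr rfl fun j _ => ?_
            rw [Finset.sum_comm]
            refine Finset.sum_congr rfl fun k _ => ?_
            rw [Finset.mul_sum]
            refine Finset.sum_congr rfl fun i _ => ?_
            rw [abs_mul, abs_mul, abs_of_nonneg (hxp0 j), abs_of_nonneg (hxm0 k)]
        _ ≤ ∑ j, ∑ k, xp j * xm k * (2 * var A) :=
            Finset.sum_le_sum fun j _ => Finset.sum_le_sum fun k _ =>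
              mul_le_mul_of_nonneg_left (col_diff_le A j k)
                (mul_nonneg (hxp0 j) (hxm0 k))
        _ = s * (var A * (2 * s)) := by
            simp_rw [mul_assoc, ← Finset.mul_sum, ← Finset.sum_mul, hsm]
            rw [← hs]; ring
    have := le_of_mul_le_mul_left step hspos
    rw [habs_sum]
    exact this

theorem stmt6 {n : ℕ} (M : Matrix (Fin n) (Fin n) ℝ)
    (hM : ∀ k, ∑ i, M i k = 1) (p : ℕ) (hp : 0 < p)
    (hvar : var (M ^ p) < 1) (E : Fin n → ℝ)
    (hE : M.mulVec E = E) (hEsum : ∑ j, E j = 1)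
    (P : Matrix (Fin n) (Fin n) ℝ) (hP : ∀ i j, P i j = E i) :
    Tendsto (fun k : ℕ => M ^ k) atTop (𝓝 P) := by
  have hMk : ∀ k : ℕ, ∀ j, ∑ i, (M ^ k) i j = 1 := by
    intro k
    induction k with
    | zero => intro j; simp [Matrix.one_apply, Finset.sum_ite_eq']
    | succ k ih =>
      intro j
      rw [pow_succ]
      simp_rw [Matrix.mul_apply]
      rw [Finset.sum_comm]
      simp_rw [← Finset.sum_mul, ih]
      simpa using hM j
  have hME : ∀ k : ℕ, (M ^ k).mulVec E = E := by
    intro k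
    induction k with
    | zero => simp
    | succ k ih => rw [pow_succ', ← Matrix.mulVec_mulVec, ih, hE]
  set c : ℝ := var (M ^ p) with hc
  have hc0 : 0 ≤ c := var_nonneg _
  refine tendsto_pi_nhds.2 fun i => tendsto_pi_nhds.2 fun j => ?_
  set x : Fin n → ℝ := (Pi.single j (1:ℝ)) - E with hxdef
  have hxsum : ∑ l, x l = 0 := by
    simp [hxdef, Finset.sum_sub_distrib, Finset.sum_pi_single', hEsum]
  have hcol : ∀ k : ℕ, ∀ i', (M ^ k).mulVec x i' = (M ^ k) i' j - E i' := by
    intro k i'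
    rw [hxdef, Matrix.mulVec_sub, Pi.sub_apply, hME k]
    congr 1
    simp [mulVec_single]
  have hsum0 : ∀ k : ℕ, ∑ l, (M ^ k).mulVec x l = 0 := fun k => by
    rw [sum_mulVec _ (hMk k) x, hxsum]
  set g : ℕ → ℝ := fun k => ∑ l, |(M ^ k).mulVec x l| with hg
  have hg0 : ∀ k, 0 ≤ g k := fun k => Finset.sum_nonneg fun l _ => abs_nonneg _
  have hstep : ∀ k : ℕ, p ≤ k → g k ≤ c * g (k - p) := by
    intro k hk
    have hpow : M ^ k = M ^ p * M ^ (k - p) := by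
      rw [← pow_add]; congr 1; omega
    have : g k = ∑ l, |(M ^ p).mulVec ((M ^ (k - p)).mulVec x) l| := by
      simp_rw [hg, hpow, ← Matrix.mulVec_mulVec]
    rw [this]
    exact contraction _ _ (hsum0 _)
  have hc1 : c < 1 := hvar
  -- bound over the first p values
  obtain ⟨B, hB, hBmax⟩ : ∃ B : ℝ, (∀ r < p, g r ≤ B) ∧ 0 ≤ B := by
    refine ⟨(Finset.range p).sup' (by simp [hp.ne']) g, fun r hr => Finset.le_sup' g (Finset.mem_range.2 hr), ?_⟩
    exact le_trans (hg0 0) (Finset.le_sup' g (Finset.mem_range.2 hp))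
  have hgB : ∀ r, g r ≤ B := by
    intro r
    induction r using Nat.strong_induction_on with
    | _ r ih =>
      by_cases h : r < p
      · exact hB r h
      · push_neg at h
        calc g r ≤ c * g (r - p) := hstep r h
          _ ≤ 1 * g (r - p) := mul_le_mul_of_nonneg_right (le_of_lt hc1) (hg0 _)
          _ = g (r - p) := one_mul _
          _ ≤ B := ih (r - p) (by omega)
  have hgq : ∀ q k, p * q ≤ k → g k ≤ c ^ q * B := by
    intro q
    induction q with
    | zero => intro k _; simpa using hgB k
    | succ q ih =>
      intro k hk
      rw [Nat.mul_succ] at hk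
      have hpk : p ≤ k := by omega
      calc g k ≤ c * g (k - p) := hstep k hpk
        _ ≤ c * (c ^ q * B) := mul_le_mul_of_nonneg_left (ih (k - p) (by omega)) hc0
        _ = c ^ (q + 1) * B := by ring
  have hgtend : Tendsto g atTop (𝓝 0) := by
    rw [Metric.tendsto_atTop]
    intro ε hε
    have htp : Tendsto (fun q : ℕ => c ^ q * B) atTop (𝓝 0) := by
      have := (tendsto_pow_atTop_nhds_zero_of_lt_one hc0 hc1).mul_const B
      simpa using this
    obtain ⟨q, hq⟩ := (htp.eventually (eventually_lt_nhds hε)).exists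
    refine ⟨p * q, fun k hk => ?_⟩
    rw [Real.dist_eq, sub_zero, abs_of_nonneg (hg0 k)]
    exact lt_of_le_of_lt (hgq q k hk) hq
  have hentry : Tendsto (fun k : ℕ => (M ^ k) i j - P i j) atTop (𝓝 0) := by
    refine squeeze_zero_norm (fun k => ?_) hgtend
    have heq : (M ^ k) i j - P i j = (M ^ k).mulVec x i := by rw [hcol k i, hP i j]
    rw [Real.norm_eq_abs, heq]
    exact Finset.single_le_sum (f := fun l => |(M ^ k).mulVec x l|)
      (fun l _ => abs_nonneg _) (Finset.mem_univ i)
  have := hentry.add_const (P i j)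
  simpa using this
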